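/- arXiv:1112.3086 — 5 statements merged into one kernel-verified Lean document; each statement's English description precedes it below -/
import Mathlib

section
/- Let C be a convex set in a Banach space X, let 0 < α ≤ β, and let V be an α-separated, β-dense subset of C. Define a graph G on V by joining u,v iff ‖u−v‖ ≤ 3β. Then for all distinct u,v ∈ V, if ‖u−v‖ > 2β then d_G(u,v) ≤ ⌊‖u−v‖/β⌋ − 1. -/
/-- The `(C,α,β)`-graph on a subset `V` of a normed space: vertices `u, v ∈ V` are
adjacent iff `u ≠ v` and `‖u − v‖ ≤ 3β`. -/
def cabGraph {X : Type*} [NormedAddCommGroup X] (V : Set X) (β : ℝ) :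
    SimpleGraph V :=
  SimpleGraph.fromRel (fun u v => ‖(u : X) - (v : X)‖ ≤ 3 * β)

theorem cabGraph_dist_le_floor_sub_one
    {X : Type*} [NormedAddCommGroup X] [NormedSpace ℝ X] [CompleteSpace X]
    (C : Set X) (hC : Convex ℝ C) (α β : ℝ) (hα : 0 < α) (hαβ : α ≤ β)
    (V : Set X) (hVC : V ⊆ C)
    (hdense : ∀ x ∈ C, ∃ y ∈ V, dist x y ≤ β)
    (hsep : ∀ x ∈ V, ∀ y ∈ V, x ≠ y → α ≤ dist x y) :
    ∀ u v : V, u ≠ v → 2 * β < ‖(u : X) - (v : X)‖ →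
      ((cabGraph V β).dist u v : ℤ) ≤ ⌊‖(u : X) - (v : X)‖ / β⌋ - 1 := by
  have hβ : 0 < β := hα.trans_le hαβ
  -- adjacency criterion
  have hadj : ∀ u v : V, u ≠ v → ‖(u : X) - (v : X)‖ ≤ 3 * β → (cabGraph V β).Adj u v := by
    intro u v hne hle
    exact SimpleGraph.fromRel_adj .. |>.mpr ⟨hne, Or.inl hle⟩
  -- key claim by induction: existence of a short walk
  have key : ∀ n : ℕ, ∀ u v : V, u ≠ v → 2 * β < ‖(u : X) - (v : X)‖ →
      ‖(u : X) - (v : X)‖ ≤ (n + 2) * β →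
      ∃ p : (cabGraph V β).Walk u v, (p.length : ℤ) ≤ ⌊‖(u : X) - (v : X)‖ / β⌋ - 1 := by
    intro n
    induction n with
    | zero =>
      intro u v hne hlt hle
      norm_num at hle
      linarith
    | succ n ih =>
      intro u v hne hlt hle
      have hfloor2 : (2 : ℤ) ≤ ⌊‖(u : X) - (v : X)‖ / β⌋ := by
        apply Int.le_floor.mpr
        push_cast
        rw [le_div_iff₀ hβ]
        linarith
      by_cases h3 : ‖(u : X) - (v : X)‖ ≤ 3 * β
      · exact ⟨(hadj u v hne h3).toWalk, by push_cast [SimpleGraph.Walk.length_cons, SimpleGraph.Walk.length_nil]; omega⟩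
      push_neg at h3
      -- construct the intermediate point
      set D := ‖(u : X) - (v : X)‖ with hD
      have hD0 : 0 < D := by linarith
      set t : ℝ := 2 * β / D with ht
      have ht0 : 0 ≤ t := by positivity
      have ht1 : t ≤ 1 := by
        rw [ht, div_le_one hD0]; linarith
      set w : X := (1 - t) • (u : X) + t • (v : X) with hw
      have hwC : w ∈ C := hC (hVC u.2) (hVC v.2) (by linarith) ht0 (by ring)
      have huw : (u : X) - w = t • ((u : X) - (v : X)) := by
        rw [hw]; module
      have hwv : w - (v : X) = (1 - t) • ((u : X) - (v : X)) := by
        rw [hw]; module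
      have htD : t * D = 2 * β := by
        rw [ht]; field_simp
      have huwn : ‖(u : X) - w‖ = 2 * β := by
        rw [huw, norm_smul, Real.norm_of_nonneg ht0, ← hD, htD]
      have hwvn : ‖w - (v : X)‖ = D - 2 * β := by
        rw [hwv, norm_smul, Real.norm_of_nonneg (by linarith), ← hD]
        nlinarith [htD]
      obtain ⟨y, hyV, hdy⟩ := hdense w hwC
      rw [dist_eq_norm] at hdy
      set y' : V := ⟨y, hyV⟩ with hy'
      have huy : ‖(u : X) - y‖ ≤ 3 * β := by
        calc ‖(u : X) - y‖ ≤ ‖(u : X) - w‖ + ‖w - y‖ := norm_sub_le_norm_sub_add_norm_sub _ _ _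
        _ ≤ 3 * β := by rw [huwn]; linarith
      have huy' : β ≤ ‖(u : X) - y‖ := by
        have := norm_sub_le_norm_sub_add_norm_sub (u : X) y w
        rw [norm_sub_rev y w] at this
        linarith [huwn ▸ this]
      have hune : u ≠ y' := by
        intro h
        apply absurd huy'
        push_neg
        rw [h]
        simpa [hy'] using hβ
      have hyv_le : ‖(y : X) - (v : X)‖ ≤ D - β := by
        calc ‖(y : X) - (v : X)‖ ≤ ‖(y : X) - w‖ + ‖w - (v : X)‖ :=
          norm_sub_le_norm_sub_add_norm_sub _ _ _
        _ ≤ D - β := by rw [norm_sub_rev, hwvn]; linarith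
      have hyv_ge : D - 3 * β ≤ ‖(y : X) - (v : X)‖ := by
        have := norm_sub_le_norm_sub_add_norm_sub w (y : X) (v : X)
        rw [hwvn] at this
        linarith
      have hyne : y' ≠ v := by
        intro h
        apply absurd hyv_ge
        push_neg
        have : (y : X) - (v : X) = 0 := by rw [show (y:X) = ((y':V):X) from rfl, h, sub_self]
        rw [this, norm_zero]
        linarith
      have hAuy : (cabGraph V β).Adj u y' := hadj u y' hune huy
      by_cases h3y : ‖(y : X) - (v : X)‖ ≤ 3 * β
      · -- two steps suffice
        have hfloor3 : (3 : ℤ) ≤ ⌊D / β⌋ := by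
          apply Int.le_floor.mpr
          push_cast
          rw [le_div_iff₀ hβ]
          linarith
        have hAyv : (cabGraph V β).Adj y' v := hadj y' v hyne h3y
        exact ⟨SimpleGraph.Walk.cons hAuy hAyv.toWalk, by
          push_cast [SimpleGraph.Walk.length_cons, SimpleGraph.Walk.length_nil]; omega⟩
      · push_neg at h3y
        obtain ⟨p, hp⟩ := ih y' v hyne (by linarith) (by push_cast; push_cast at hle; linarith)
        refine ⟨SimpleGraph.Walk.cons hAuy p, ?_⟩
        have hp' : (p.length : ℤ) ≤ ⌊‖(y : X) - (v : X)‖ / β⌋ - 1 := hp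
        have hmono : ⌊‖(y : X) - (v : X)‖ / β⌋ ≤ ⌊D / β⌋ - 1 := by
          have : ⌊‖(y : X) - (v : X)‖ / β⌋ ≤ ⌊(D - β) / β⌋ :=
            Int.floor_le_floor (by gcongr)
          rwa [sub_div, div_self hβ.ne', Int.floor_sub_one] at this
        push_cast [SimpleGraph.Walk.length_cons]
        omega
  intro u v hne hlt
  obtain ⟨p, hp⟩ := key ⌈‖(u : X) - (v : X)‖ / β⌉₊ u v hne hlt (by
    have h1 : ‖(u : X) - (v : X)‖ / β ≤ ⌈‖(u : X) - (v : X)‖ / β⌉₊ := Nat.le_ceil _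
    rw [div_le_iff₀ hβ] at h1
    nlinarith)
  calc ((cabGraph V β).dist u v : ℤ) ≤ (p.length : ℤ) := by
        exact_mod_cast Nat.cast_le.mpr (SimpleGraph.dist_le p)
  _ ≤ _ := hp
end

section
/- Let C be a convex set in a Banach space X, let 0 < α ≤ β, and let V be an α-separated, β-dense subset of C. Let G be the graph on V joining u,v iff ‖u−v‖ ≤ 3β, with shortest path metric d_G. Then for all distinct u,v ∈ V: d_G(u,v) ≤ max{1/α, 1/β}·‖u−v‖, i.e., the natural embedding (V,d_G) → X has inverse Lipschitz constant at most max{1/α, 1/β}. -/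
theorem cabGraph_inverse_lipschitz
    {X : Type*} [NormedAddCommGroup X] [NormedSpace ℝ X] [CompleteSpace X]
    (C : Set X) (hC : Convex ℝ C) (α β : ℝ) (hα : 0 < α) (hαβ : α ≤ β)
    (V : Set X) (hVC : V ⊆ C)
    (hdense : ∀ x ∈ C, ∃ y ∈ V, dist x y ≤ β)
    (hsep : ∀ x ∈ V, ∀ y ∈ V, x ≠ y → α ≤ dist x y) :
    ∀ u v : V, u ≠ v →
      ((cabGraph V β).dist u v : ℝ) ≤ max (1 / α) (1 / β) * ‖(u : X) - (v : X)‖ := by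
  have hβ : 0 < β := hα.trans_le hαβ
  have hadj : ∀ u v : V, u ≠ v → ‖(u : X) - (v : X)‖ ≤ 3 * β → (cabGraph V β).Adj u v := by
    intro u v huv h
    exact ⟨huv, Or.inl h⟩
  have hsep' : ∀ u v : V, u ≠ v → α ≤ ‖(u : X) - (v : X)‖ := by
    intro u v huv
    have := hsep u u.2 v v.2 (fun h => huv (Subtype.ext h))
    rwa [dist_eq_norm] at this
  have key : ∀ n : ℕ, ∀ u v : V, u ≠ v → ‖(u : X) - (v : X)‖ ≤ n * β →
      (cabGraph V β).Reachable u v ∧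
        ((cabGraph V β).dist u v : ℝ) ≤ ‖(u : X) - (v : X)‖ / α := by
    intro n
    induction n with
    | zero =>
      intro u v huv h
      have := hsep' u v huv
      simp only [Nat.cast_zero, zero_mul] at h
      linarith
    | succ n ih =>
      intro u v huv h
      set t : ℝ := ‖(u : X) - (v : X)‖ with ht
      have htα : α ≤ t := hsep' u v huv
      have ht0 : 0 < t := hα.trans_le htα
      by_cases hcase : t ≤ 3 * β
      · have hA := hadj u v huv hcase
        have hd : (cabGraph V β).dist u v = 1 :=
          (SimpleGraph.dist_eq_one_iff_adj).2 hA
        refine ⟨hA.reachable, ?_⟩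
        rw [hd, le_div_iff₀ hα]
        simpa using htα
      · push_neg at hcase
        set θ : ℝ := 2 * β / t with hθ
        have hθ0 : 0 ≤ θ := by positivity
        have hθ1 : θ ≤ 1 := by rw [div_le_one ht0]; linarith
        set x : X := (1 - θ) • (u : X) + θ • (v : X) with hx
        have hxC : x ∈ C := hC (hVC u.2) (hVC v.2) (by linarith) hθ0 (by ring)
        obtain ⟨w, hwV, hwx⟩ := hdense x hxC
        rw [dist_comm, dist_eq_norm] at hwx
        have hxw : ‖x - w‖ ≤ β := by rwa [norm_sub_rev] at hwx
        set W : V := ⟨w, hwV⟩ with hW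
        have hxu : ‖x - (u : X)‖ = 2 * β := by
          have hrw : x - (u : X) = θ • ((v : X) - (u : X)) := by rw [hx]; module
          rw [hrw, norm_smul, Real.norm_eq_abs, abs_of_nonneg hθ0, hθ, norm_sub_rev, ← ht]
          field_simp
        have hxv : ‖x - (v : X)‖ = t - 2 * β := by
          have hrw : x - (v : X) = (1 - θ) • ((u : X) - (v : X)) := by rw [hx]; module
          rw [hrw, norm_smul, Real.norm_eq_abs, abs_of_nonneg (by linarith), ← ht, hθ]
          field_simp
        have huw : ‖(u : X) - (W : X)‖ ≤ 3 * β := by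
          calc ‖(u : X) - w‖ ≤ ‖(u : X) - x‖ + ‖x - w‖ := norm_sub_le_norm_sub_add_norm_sub _ _ _
            _ ≤ 2 * β + β := by rw [norm_sub_rev (u : X) x, hxu]; linarith
            _ = 3 * β := by ring
        have huW : u ≠ W := by
          intro hEq
          have huww : (u : X) = w := congrArg Subtype.val hEq
          have h1 : ‖w - x‖ = 2 * β := by rw [← huww, norm_sub_rev, hxu]
          linarith
        have hwv : ‖(W : X) - (v : X)‖ ≤ t - β := by
          calc ‖w - (v : X)‖ ≤ ‖w - x‖ + ‖x - (v : X)‖ := norm_sub_le_norm_sub_add_norm_sub _ _ _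
            _ ≤ β + (t - 2 * β) := by rw [norm_sub_rev w x, hxv]; linarith
            _ = t - β := by ring
        have huw' : ‖(u : X) - w‖ ≤ 3 * β := huw
        have hWv : W ≠ v := by
          intro hEq
          have h1 : t ≤ ‖(u : X) - w‖ + ‖w - (v : X)‖ := by
            rw [ht]; exact norm_sub_le_norm_sub_add_norm_sub _ _ _
          have hwvv : w = (v : X) := congrArg Subtype.val hEq
          have h2 : ‖w - (v : X)‖ = 0 := by rw [hwvv, sub_self, norm_zero]
          linarith
        have hWvn : ‖(W : X) - (v : X)‖ ≤ n * β := by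
          have h' : t ≤ (n + 1) * β := by push_cast at h ⊢; linarith
          linarith
        obtain ⟨hreach, hIH⟩ := ih W v hWv hWvn
        have hAuW : (cabGraph V β).Adj u W := hadj u W huW huw
        refine ⟨hAuW.reachable.trans hreach, ?_⟩
        obtain ⟨p, hp⟩ := hreach.exists_walk_length_eq_dist
        have hdle : (cabGraph V β).dist u v ≤ 1 + (cabGraph V β).dist W v := by
          have := (cabGraph V β).dist_le (SimpleGraph.Walk.cons hAuW p)
          simp only [SimpleGraph.Walk.length_cons, hp] at this
          omega
        calc ((cabGraph V β).dist u v : ℝ) ≤ 1 + ((cabGraph V β).dist W v : ℝ) := by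
              exact_mod_cast hdle
          _ ≤ 1 + (t - β) / α := by
              have h2 : ‖(W : X) - (v : X)‖ / α ≤ (t - β) / α := by gcongr
              linarith
          _ ≤ t / α := by
              rw [← sub_nonneg]
              have : t / α - (1 + (t - β) / α) = (β - α) / α := by field_simp; ring
              rw [this]
              exact div_nonneg (by linarith) hα.le
  intro u v huv
  have hmax : max (1 / α) (1 / β) = 1 / α :=
    max_eq_left (one_div_le_one_div_of_le hα hαβ)
  rw [hmax]
  have hn : ‖(u : X) - (v : X)‖ ≤ (⌈‖(u : X) - (v : X)‖ / β⌉₊ : ℝ) * β := by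
    rw [← div_le_iff₀ hβ]
    exact Nat.le_ceil _
  have := (key ⌈‖(u : X) - (v : X)‖ / β⌉₊ u v huv hn).2
  rw [one_div, inv_mul_eq_div]
  exact this
end

section
/- Let G be a finite connected graph, let e(G) denote the number of edges of G, and let H be the graph constructed from G and M ∈ ℕ as follows: for each vertex v of G take a 'short' path p_v of length e(G); label the vertices of each short path monotonically by the edges of G in a fixed order; for each edge uv of G, join the vertex of p_u labelled uv to the vertex of p_v labelled uv by a 'long' path of length M. Define ψ: V(G) → V(H) by sending each vertex u to the vertex of p_u labelled by one fixed edge p. Then for all u,v ∈ V(G): M·d_G(u,v) ≤ d_H(ψ(u),ψ(v)) ≤ (2e(G)+M)·d_G(u,v). -/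
/-- The graph `H` built from a finite graph `G` with `k = e(G)` edges (enumerated by
`label`): each vertex `v` of `G` is replaced by a short path `p_v` with vertices
`(v, 0), …, (v, k)`, the vertex `(v, label e)` being labelled by the edge `e`; each
edge `e = uv` of `G` is replaced by a long path of `M` edges joining the vertex of
`p_u` labelled `e` to the vertex of `p_v` labelled `e`, through `M − 1` internal
vertices `(e, 0), …, (e, M − 2)` (for `M = 1` the two labelled vertices are joined
directly). -/
def expandedGraph {V : Type*} [LinearOrder V] (G : SimpleGraph V) (k M : ℕ)
    (label : G.edgeSet ≃ Fin k) :
    SimpleGraph ((V × Fin (k + 1)) ⊕ (G.edgeSet × Fin (M - 1))) :=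
  SimpleGraph.fromRel (fun x y =>
    match x, y with
    | Sum.inl (a, i), Sum.inl (b, j) =>
        (a = b ∧ j.val = i.val + 1) ∨
        (M = 1 ∧ i = j ∧ ∃ e : G.edgeSet, ((label e : Fin k) : ℕ) = i.val ∧
          (e : Sym2 V) = s(a, b) ∧ a ≠ b)
    | Sum.inl (a, i), Sum.inr (e, t) =>
        i.val = ((label e : Fin k) : ℕ) ∧
        ((∃ b, (e : Sym2 V) = s(a, b) ∧ a < b ∧ t.val = 0) ∨
         (∃ b, (e : Sym2 V) = s(b, a) ∧ b < a ∧ t.val = M - 2))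
    | Sum.inr (e, t), Sum.inr (e', t') =>
        e = e' ∧ (t'.val = t.val + 1 ∨ t.val = t'.val + 1)
    | Sum.inr _, Sum.inl _ => False)

/-- The map `ψ` sending a vertex `u` of `G` to the vertex of the short path `p_u`
labelled by the fixed edge `p`. -/
def psiMap {V : Type*} [LinearOrder V] (G : SimpleGraph V) (k M : ℕ)
    (label : G.edgeSet ≃ Fin k) (p : G.edgeSet) (u : V) :
    (V × Fin (k + 1)) ⊕ (G.edgeSet × Fin (M - 1)) :=
  Sum.inl (u, (label p).castSucc)

namespace ExpandedGraphAux

open SimpleGraph Sum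

variable {V : Type*} [LinearOrder V] {G : SimpleGraph V} {k M : ℕ}
  {label : G.edgeSet ≃ Fin k}

/-- The defining relation of `expandedGraph`, as a standalone definition. -/
def eRel (G : SimpleGraph V) (k M : ℕ) (label : G.edgeSet ≃ Fin k) :
    ((V × Fin (k + 1)) ⊕ (G.edgeSet × Fin (M - 1))) →
    ((V × Fin (k + 1)) ⊕ (G.edgeSet × Fin (M - 1))) → Prop := fun x y =>
  match x, y with
  | Sum.inl (a, i), Sum.inl (b, j) =>
      (a = b ∧ j.val = i.val + 1) ∨
      (M = 1 ∧ i = j ∧ ∃ e : G.edgeSet, ((label e : Fin k) : ℕ) = i.val ∧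
        (e : Sym2 V) = s(a, b) ∧ a ≠ b)
  | Sum.inl (a, i), Sum.inr (e, t) =>
      i.val = ((label e : Fin k) : ℕ) ∧
      ((∃ b, (e : Sym2 V) = s(a, b) ∧ a < b ∧ t.val = 0) ∨
       (∃ b, (e : Sym2 V) = s(b, a) ∧ b < a ∧ t.val = M - 2))
  | Sum.inr (e, t), Sum.inr (e', t') =>
      e = e' ∧ (t'.val = t.val + 1 ∨ t.val = t'.val + 1)
  | Sum.inr _, Sum.inl _ => False

lemma expandedGraph_eq :
    expandedGraph G k M label = SimpleGraph.fromRel (eRel G k M label) := rfl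

lemma adj_iff {x y : (V × Fin (k + 1)) ⊕ (G.edgeSet × Fin (M - 1))} :
    (expandedGraph G k M label).Adj x y ↔
      x ≠ y ∧ (eRel G k M label x y ∨ eRel G k M label y x) := by
  rw [expandedGraph_eq]; exact SimpleGraph.fromRel_adj _ _ _

lemma sym2_eq_inf_sup (e : Sym2 V) : e = s(e.inf, e.sup) := by
  induction e using Sym2.ind with
  | _ a b =>
    rcases le_total a b with h | h
    · rw [Sym2.inf_mk, Sym2.sup_mk, inf_eq_left.mpr h, sup_eq_right.mpr h]
    · rw [Sym2.inf_mk, Sym2.sup_mk, inf_eq_right.mpr h, sup_eq_left.mpr h, Sym2.eq_swap]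

lemma adj_short {a : V} {i j : Fin (k + 1)} (h : j.val = i.val + 1) :
    (expandedGraph G k M label).Adj (inl (a, i)) (inl (a, j)) := by
  rw [adj_iff]
  refine ⟨?_, Or.inl (Or.inl ⟨rfl, h⟩)⟩
  intro hc
  have : i = j := by simpa using hc
  subst this; omega

lemma adj_long {e : G.edgeSet} {t t' : Fin (M - 1)} (h : t'.val = t.val + 1) :
    (expandedGraph G k M label).Adj (inr (e, t)) (inr (e, t')) := by
  rw [adj_iff]
  refine ⟨?_, Or.inl ⟨rfl, Or.inl h⟩⟩
  intro hc
  have : t = t' := by simpa using hc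
  subst this; omega

lemma short_walk_up (a : V) : ∀ n (i j : Fin (k + 1)), j.val = i.val + n →
    ∃ w : (expandedGraph G k M label).Walk (inl (a, i)) (inl (a, j)), w.length = n := by
  intro n
  induction n with
  | zero =>
    intro i j h
    have : i = j := Fin.ext (by omega)
    subst this
    exact ⟨.nil, rfl⟩
  | succ n ih =>
    intro i j h
    have hj := j.isLt
    obtain ⟨w, hw⟩ := ih ⟨i.val + 1, by omega⟩ j (by simp only [Fin.val_mk]; omega)
    exact ⟨.cons (adj_short rfl) w, by simp [hw]⟩

lemma short_walk (a : V) (i j : Fin (k + 1)) :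
    ∃ w : (expandedGraph G k M label).Walk (inl (a, i)) (inl (a, j)), w.length ≤ k := by
  have hi := i.isLt
  have hj := j.isLt
  rcases le_total i.val j.val with h | h
  · obtain ⟨w, hw⟩ := short_walk_up a (j.val - i.val) i j (by omega)
    exact ⟨w, by omega⟩
  · obtain ⟨w, hw⟩ := short_walk_up a (i.val - j.val) j i (by omega)
    exact ⟨w.reverse, by rw [SimpleGraph.Walk.length_reverse, hw]; omega⟩

lemma long_walk (e : G.edgeSet) : ∀ n (h : n < M - 1),
    ∃ w : (expandedGraph G k M label).Walk (inr (e, ⟨0, by omega⟩)) (inr (e, ⟨n, h⟩)),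
      w.length = n := by
  intro n
  induction n with
  | zero => intro h; exact ⟨.nil, rfl⟩
  | succ n ih =>
    intro h
    obtain ⟨w, hw⟩ := ih (by omega)
    exact ⟨w.concat (adj_long rfl), by simp [hw]⟩

lemma cross_walk_lt (hM : 1 ≤ M) (e : G.edgeSet) {a b : V} (he : (e : Sym2 V) = s(a, b))
    (hlt : a < b) :
    ∃ w : (expandedGraph G k M label).Walk
        (inl (a, (label e).castSucc)) (inl (b, (label e).castSucc)), w.length = M := by
  by_cases hM1 : M = 1
  · have hadj : (expandedGraph G k M label).Adj
        (inl (a, (label e).castSucc)) (inl (b, (label e).castSucc)) := by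
      rw [adj_iff]
      refine ⟨?_, Or.inl (Or.inr ⟨hM1, rfl, e, rfl, he, hlt.ne⟩)⟩
      intro hc
      have : a = b := by simpa using hc
      exact hlt.ne this
    exact ⟨.cons hadj .nil, by simp [hM1]⟩
  · have hM2 : 2 ≤ M := by omega
    have hA : (expandedGraph G k M label).Adj
        (inl (a, (label e).castSucc)) (inr (e, ⟨0, by omega⟩)) := by
      rw [adj_iff]
      exact ⟨by simp, Or.inl ⟨rfl, Or.inl ⟨b, he, hlt, rfl⟩⟩⟩
    have hB : (expandedGraph G k M label).Adj
        (inr (e, ⟨M - 2, by omega⟩)) (inl (b, (label e).castSucc)) := by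
      rw [adj_iff]
      exact ⟨by simp, Or.inr ⟨rfl, Or.inr ⟨a, he, hlt, rfl⟩⟩⟩
    obtain ⟨w, hw⟩ := long_walk (M := M) (label := label) e (M - 2) (by omega)
    exact ⟨.cons hA (w.concat hB), by simp [hw]; omega⟩

lemma cross_walk (hM : 1 ≤ M) (e : G.edgeSet) {a b : V} (he : (e : Sym2 V) = s(a, b))
    (hne : a ≠ b) :
    ∃ w : (expandedGraph G k M label).Walk
        (inl (a, (label e).castSucc)) (inl (b, (label e).castSucc)), w.length = M := by
  rcases lt_trichotomy a b with h | h | h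
  · exact cross_walk_lt hM e he h
  · exact absurd h hne
  · obtain ⟨w, hw⟩ := cross_walk_lt hM e (he.trans (Sym2.eq_swap)) h
    exact ⟨w.reverse, by simpa using hw⟩

lemma edge_walk (hM : 1 ≤ M) (p : G.edgeSet) {a b : V} (hab : G.Adj a b) :
    ∃ w : (expandedGraph G k M label).Walk
        (psiMap G k M label p a) (psiMap G k M label p b), w.length ≤ 2 * k + M := by
  set e : G.edgeSet := ⟨s(a, b), hab⟩ with hedef
  obtain ⟨w1, h1⟩ := short_walk (label := label) (M := M) a ((label p).castSucc)
    ((label e).castSucc)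
  obtain ⟨w2, h2⟩ := cross_walk hM e rfl hab.ne
  obtain ⟨w3, h3⟩ := short_walk (label := label) (M := M) b ((label e).castSucc)
    ((label p).castSucc)
  exact ⟨(w1.append w2).append w3, by
    exact ((SimpleGraph.Walk.length_append _ _).trans (congrArg (fun x => x + w3.length)
      (SimpleGraph.Walk.length_append w1 w2))).trans_le (by beta_reduce; omega)⟩

lemma walk_upper (hM : 1 ≤ M) (p : G.edgeSet) {u v : V} (w : G.Walk u v) :
    ∃ w' : (expandedGraph G k M label).Walk
        (psiMap G k M label p u) (psiMap G k M label p v),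
      w'.length ≤ (2 * k + M) * w.length := by
  induction w with
  | nil => exact ⟨.nil, by simp⟩
  | cons h q ih =>
    obtain ⟨w1, h1⟩ := edge_walk (label := label) hM p h
    obtain ⟨w2, h2⟩ := ih
    refine ⟨w1.append w2, ?_⟩
    rw [SimpleGraph.Walk.length_append, SimpleGraph.Walk.length_cons, Nat.mul_add,
      Nat.mul_one]
    omega

/-- The potential function used for the lower bound. -/
noncomputable def phi (G : SimpleGraph V) (k M : ℕ) (u : V) :
    (V × Fin (k + 1)) ⊕ (G.edgeSet × Fin (M - 1)) → ℤ
  | inl (a, _) => M * G.dist u a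
  | inr (e, t) => M * G.dist u (e : Sym2 V).inf +
      (t.val + 1) * ((G.dist u (e : Sym2 V).sup : ℤ) - (G.dist u (e : Sym2 V).inf : ℤ))

lemma dist_diff (hG : G.Connected) {a b : V} (hab : G.Adj a b) (u : V) :
    |(G.dist u a : ℤ) - (G.dist u b : ℤ)| ≤ 1 := by
  have h1 : G.dist u a ≤ G.dist u b + G.dist b a := hG.dist_triangle
  have h2 : G.dist u b ≤ G.dist u a + G.dist a b := hG.dist_triangle
  have h3 : G.dist b a = 1 := SimpleGraph.dist_eq_one_iff_adj.mpr hab.symm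
  have h4 : G.dist a b = 1 := SimpleGraph.dist_eq_one_iff_adj.mpr hab
  rw [h3] at h1; rw [h4] at h2
  rw [abs_le]
  constructor <;> push_cast <;> omega

lemma adj_of_edge (e : G.edgeSet) : G.Adj (e : Sym2 V).inf (e : Sym2 V).sup := by
  have := e.2
  rw [sym2_eq_inf_sup (e : Sym2 V)] at this
  exact (SimpleGraph.mem_edgeSet G).mp this

lemma phi_rel (hG : G.Connected) (u : V)
    {x y : (V × Fin (k + 1)) ⊕ (G.edgeSet × Fin (M - 1))}
    (h : eRel G k M label x y) : |phi G k M u x - phi G k M u y| ≤ 1 := by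
  match x, y with
  | inl (a, i), inl (b, j) =>
    rcases h with ⟨rfl, -⟩ | ⟨hM1, -, e, -, he, hne⟩
    · simp [phi]
    · have hadj : G.Adj a b := (SimpleGraph.mem_edgeSet G).mp (he ▸ e.2)
      have hd := dist_diff hG hadj u
      simp only [phi, hM1]
      rw [show ((1 : ℕ) : ℤ) * (G.dist u a : ℤ) - ((1 : ℕ) : ℤ) * (G.dist u b : ℤ)
        = (G.dist u a : ℤ) - (G.dist u b : ℤ) by push_cast; ring]
      exact hd
  | inl (a, i), inr (e, t) =>
    have hadj := adj_of_edge (G := G) e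
    have hd := dist_diff hG hadj u
    have hM2 : 2 ≤ M := by have := t.isLt; omega
    obtain ⟨-, ⟨b, he, hlt, ht⟩ | ⟨b, he, hlt, ht⟩⟩ := h
    · have hinf : (e : Sym2 V).inf = a := by rw [he, Sym2.inf_mk, inf_eq_left.mpr hlt.le]
      have hsup : (e : Sym2 V).sup = b := by rw [he, Sym2.sup_mk, sup_eq_right.mpr hlt.le]
      simp only [phi, hinf, hsup, ht]
      rw [show (M : ℤ) * (G.dist u a : ℤ) - ((M : ℤ) * (G.dist u a : ℤ) +
          (((0 : ℕ) : ℤ) + 1) * ((G.dist u b : ℤ) - (G.dist u a : ℤ)))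
        = (G.dist u a : ℤ) - (G.dist u b : ℤ) by push_cast; ring]
      rw [hinf, hsup] at hd
      exact hd
    · have hinf : (e : Sym2 V).inf = b := by rw [he, Sym2.inf_mk, inf_eq_left.mpr hlt.le]
      have hsup : (e : Sym2 V).sup = a := by rw [he, Sym2.sup_mk, sup_eq_right.mpr hlt.le]
      simp only [phi, hinf, hsup, ht]
      rw [hinf, hsup] at hd
      have hcast : ((M - 2 : ℕ) : ℤ) = (M : ℤ) - 2 := by
        push_cast [hM2]; ring
      rw [show (M : ℤ) * (G.dist u a : ℤ) - ((M : ℤ) * (G.dist u b : ℤ) +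
          (((M - 2 : ℕ) : ℤ) + 1) * ((G.dist u a : ℤ) - (G.dist u b : ℤ)))
        = (G.dist u a : ℤ) - (G.dist u b : ℤ) by rw [hcast]; ring]
      rw [abs_sub_comm]
      exact hd
  | inr (e, t), inr (e', t') =>
    obtain ⟨rfl, ht | ht⟩ := h
    all_goals {
      have hadj := adj_of_edge (G := G) e
      have hd := dist_diff hG hadj u
      simp only [phi]
      rw [show (M : ℤ) * (G.dist u (e : Sym2 V).inf : ℤ) +
          ((t.val : ℤ) + 1) * ((G.dist u (e : Sym2 V).sup : ℤ) -
            (G.dist u (e : Sym2 V).inf : ℤ)) -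
          ((M : ℤ) * (G.dist u (e : Sym2 V).inf : ℤ) +
          ((t'.val : ℤ) + 1) * ((G.dist u (e : Sym2 V).sup : ℤ) -
            (G.dist u (e : Sym2 V).inf : ℤ)))
        = ((t.val : ℤ) - (t'.val : ℤ)) * ((G.dist u (e : Sym2 V).sup : ℤ) -
            (G.dist u (e : Sym2 V).inf : ℤ)) by ring]
      have htt : ((t.val : ℤ) - (t'.val : ℤ)) = 1 ∨ ((t.val : ℤ) - (t'.val : ℤ)) = -1 := by
        omega
      rcases htt with htt | htt <;> rw [htt] <;>
        simp only [one_mul, neg_one_mul, abs_neg, abs_sub_comm] <;>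
        [exact hd; exact abs_sub_comm (G.dist u (e : Sym2 V).inf : ℤ)
          (G.dist u (e : Sym2 V).sup : ℤ) ▸ hd]
    }
  | inr _, inl _ => exact absurd h (by simp [eRel])

lemma phi_adj (hG : G.Connected) (u : V)
    {x y : (V × Fin (k + 1)) ⊕ (G.edgeSet × Fin (M - 1))}
    (h : (expandedGraph G k M label).Adj x y) : |phi G k M u x - phi G k M u y| ≤ 1 := by
  rw [adj_iff] at h
  obtain ⟨-, h | h⟩ := h
  · exact phi_rel hG u h
  · rw [abs_sub_comm]; exact phi_rel hG u h

lemma phi_walk (hG : G.Connected) (u : V)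
    {x y : (V × Fin (k + 1)) ⊕ (G.edgeSet × Fin (M - 1))}
    (w : (expandedGraph G k M label).Walk x y) :
    |phi G k M u x - phi G k M u y| ≤ w.length := by
  induction w with
  | nil => simp
  | @cons x z y h q ih =>
    have h1 := phi_adj (label := label) hG u h
    calc |phi G k M u x - phi G k M u y|
        ≤ |phi G k M u x - phi G k M u z| + |phi G k M u z - phi G k M u y| :=
          abs_sub_le _ _ _
      _ ≤ (SimpleGraph.Walk.cons h q).length := by
          rw [SimpleGraph.Walk.length_cons]; push_cast; omega

end ExpandedGraphAux

theorem expandedGraph_dist_bounds {V : Type*} [Fintype V] [LinearOrder V]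
    (G : SimpleGraph V) (hG : G.Connected) (k M : ℕ) (hM : 1 ≤ M)
    (label : G.edgeSet ≃ Fin k) (p : G.edgeSet) (u v : V) :
    M * G.dist u v ≤
      (expandedGraph G k M label).dist (psiMap G k M label p u) (psiMap G k M label p v) ∧
    (expandedGraph G k M label).dist (psiMap G k M label p u) (psiMap G k M label p v) ≤
      (2 * k + M) * G.dist u v := by
  open ExpandedGraphAux in
  obtain ⟨wg, hwg⟩ := hG.exists_walk_length_eq_dist u v
  obtain ⟨w', hw'⟩ := ExpandedGraphAux.walk_upper (label := label) hM p wg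
  have hupper : (expandedGraph G k M label).dist (psiMap G k M label p u)
      (psiMap G k M label p v) ≤ (2 * k + M) * G.dist u v := by
    calc (expandedGraph G k M label).dist (psiMap G k M label p u) (psiMap G k M label p v)
        ≤ w'.length := SimpleGraph.dist_le w'
      _ ≤ (2 * k + M) * wg.length := hw'
      _ = (2 * k + M) * G.dist u v := by rw [hwg]
  refine ⟨?_, hupper⟩
  have hreach : (expandedGraph G k M label).Reachable (psiMap G k M label p u)
      (psiMap G k M label p v) := ⟨w'⟩
  obtain ⟨wh, hwh⟩ := hreach.exists_walk_length_eq_dist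
  have hphi := ExpandedGraphAux.phi_walk (label := label) hG u wh
  have h0 : ExpandedGraphAux.phi G k M u (psiMap G k M label p u) = 0 := by
    simp [ExpandedGraphAux.phi, psiMap]
  have h1 : ExpandedGraphAux.phi G k M u (psiMap G k M label p v) =
      (M : ℤ) * G.dist u v := by
    simp [ExpandedGraphAux.phi, psiMap]
  rw [h0, h1, zero_sub, abs_neg, abs_of_nonneg (by positivity), hwh] at hphi
  exact_mod_cast hphi
end

section
/- Let τ: V(G) → X be a map from the vertices of a finite graph G into a normed space X satisfying ‖τ(u)−τ(v)‖ ≥ d_G(u,v) and ‖τ(u)−τ(v)‖ ≤ L·d_G(u,v). Let W ⊇ X be a normed space with dim(W/X) = e(G) and let {e_{uv}}_{uv∈E(G)} be unit vectors in W that lift an Auerbach basis of W/X, with biorthogonal functionals e*_{uv} ∈ W*, ‖e*_{uv}‖=1, vanishing on X. Define f on the thickening TG by mapping the point of t(uv) at distance α ∈ [0,1] from u to α·τ(v) + (1−α)·τ(u) + min{2α, 2(1−α)}·e_{uv}. Then f is Lipschitz with constant at most L+2. -/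
open Classical in
/-- The geodesic distance in the thickening `TG` of a graph `G` between the point of
the segment `t(uv)` at parameter `α` from `u` and the point of the segment `t(wz)` at
parameter `β` from `w`: either a direct route along a common segment, or a route
through the endpoints, using the shortest path metric of `G` between endpoints. -/
noncomputable def thickeningDist {V : Type*} (G : SimpleGraph V)
    (u v : V) (α : ℝ) (w z : V) (β : ℝ) : ℝ :=
  let through := min (min (α + G.dist u w + β) (α + G.dist u z + (1 - β)))
    (min ((1 - α) + G.dist v w + β) ((1 - α) + G.dist v z + (1 - β)))
  if (u, v) = (w, z) then min |α - β| through
  else if (u, v) = (z, w) then min |α - (1 - β)| through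
  else through

/-- The point of the thickened segment `t(ab)` at parameter `t` from `a`, as mapped into `W`. -/
noncomputable def segMap {V W : Type*} [NormedAddCommGroup W] [NormedSpace ℝ W]
    (τ : V → W) (E : V → V → W) (a b : V) (t : ℝ) : W :=
  t • τ b + (1 - t) • τ a + min (2 * t) (2 * (1 - t)) • E a b

theorem thickening_embedding_lipschitz
    {V : Type*} [Fintype V] [DecidableEq V] (G : SimpleGraph V) (hG : G.Connected)
    {W : Type*} [NormedAddCommGroup W] [NormedSpace ℝ W]
    (X : Submodule ℝ W) (L : ℝ)
    (τ : V → W) (hτX : ∀ a : V, τ a ∈ X)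
    (hτlow : ∀ a b : V, (G.dist a b : ℝ) ≤ ‖τ a - τ b‖)
    (hτupp : ∀ a b : V, ‖τ a - τ b‖ ≤ L * (G.dist a b : ℝ))
    -- dim (W/X) = e(G)
    (hdim : Module.finrank ℝ (W ⧸ X) = Nat.card G.edgeSet)
    -- the lifted Auerbach basis {e_uv} and its biorthogonal functionals {e*_uv}
    (E : V → V → W) (hEsymm : ∀ a b : V, E a b = E b a)
    (hEnorm : ∀ a b : V, G.Adj a b → ‖E a b‖ = 1)
    (φ : V → V → (W →L[ℝ] ℝ)) (hφsymm : ∀ a b : V, φ a b = φ b a)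
    (hφnorm : ∀ a b : V, G.Adj a b → ‖φ a b‖ = 1)
    (hbiorth : ∀ a b c d : V, G.Adj a b → G.Adj c d →
      φ a b (E c d) = if s(a, b) = s(c, d) then 1 else 0)
    (hφX : ∀ a b : V, G.Adj a b → ∀ x ∈ X, φ a b x = 0) :
    -- the map f on the thickening TG is Lipschitz with constant at most L + 2
    ∀ (u v w z : V) (α β : ℝ), G.Adj u v → G.Adj w z →
      α ∈ Set.Icc (0 : ℝ) 1 → β ∈ Set.Icc (0 : ℝ) 1 →
      ‖(α • τ v + (1 - α) • τ u + min (2 * α) (2 * (1 - α)) • E u v) -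
        (β • τ z + (1 - β) • τ w + min (2 * β) (2 * (1 - β)) • E w z)‖ ≤
        (L + 2) * thickeningDist G u v α w z β := by
  intro u v w z α β huv hwz hα hβ
  obtain ⟨hα0, hα1⟩ := hα
  obtain ⟨hβ0, hβ1⟩ := hβ
  -- basic facts
  have hτnorm : ∀ a b : V, G.Adj a b → ‖τ a - τ b‖ ≤ L := by
    intro a b hab
    have h := hτupp a b
    rw [SimpleGraph.dist_eq_one_iff_adj.mpr hab] at h
    simpa using h
  -- symmetry of segMap
  have hFsymm : ∀ (a b : V) (t : ℝ), segMap τ E a b t = segMap τ E b a (1 - t) := by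
    intro a b t
    simp only [segMap]
    rw [hEsymm a b, show (1 : ℝ) - (1 - t) = t from by ring,
      min_comm (2 * (1 - t)) (2 * t)]
    abel
  -- distance from a segment point to its first endpoint
  have key1 : ∀ (a b : V) (t : ℝ), G.Adj a b → 0 ≤ t → t ≤ 1 →
      ‖segMap τ E a b t - τ a‖ ≤ (L + 2) * t := by
    intro a b t hab ht0 ht1
    have hm0 : 0 ≤ min (2 * t) (2 * (1 - t)) := le_min (by linarith) (by linarith)
    have hm1 : min (2 * t) (2 * (1 - t)) ≤ 2 * t := min_le_left _ _
    have hτ : ‖τ b - τ a‖ ≤ L := by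
      rw [norm_sub_rev]; exact hτnorm a b hab
    have hEq : segMap τ E a b t - τ a
        = t • (τ b - τ a) + min (2 * t) (2 * (1 - t)) • E a b := by
      simp only [segMap]; module
    calc ‖segMap τ E a b t - τ a‖
        = ‖t • (τ b - τ a) + min (2 * t) (2 * (1 - t)) • E a b‖ := by rw [hEq]
      _ ≤ ‖t • (τ b - τ a)‖ + ‖min (2 * t) (2 * (1 - t)) • E a b‖ := norm_add_le _ _
      _ = t * ‖τ b - τ a‖ + min (2 * t) (2 * (1 - t)) := by
          rw [norm_smul, norm_smul, hEnorm a b hab, Real.norm_eq_abs, Real.norm_eq_abs,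
            abs_of_nonneg ht0, abs_of_nonneg hm0, mul_one]
      _ ≤ (L + 2) * t := by nlinarith [mul_le_mul_of_nonneg_left hτ ht0]
  -- Lipschitz bound along a single segment
  have segLip : ∀ (a b : V) (s t : ℝ), G.Adj a b →
      ‖segMap τ E a b s - segMap τ E a b t‖ ≤ (L + 2) * |s - t| := by
    intro a b s t hab
    have hτ : ‖τ b - τ a‖ ≤ L := by rw [norm_sub_rev]; exact hτnorm a b hab
    have habs : |min (2 * s) (2 * (1 - s)) - min (2 * t) (2 * (1 - t))| ≤ 2 * |s - t| := by
      have h := abs_min_sub_min_le_max (2 * s) (2 * (1 - s)) (2 * t) (2 * (1 - t))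
      have e1 : |2 * s - 2 * t| = 2 * |s - t| := by
        rw [show (2 * s - 2 * t) = 2 * (s - t) from by ring, abs_mul, abs_two]
      have e2 : |2 * (1 - s) - 2 * (1 - t)| = 2 * |s - t| := by
        rw [show (2 * (1 - s) - 2 * (1 - t)) = -(2 * (s - t)) from by ring, abs_neg,
          abs_mul, abs_two]
      rwa [e1, e2, max_self] at h
    have hEq : segMap τ E a b s - segMap τ E a b t
        = (s - t) • (τ b - τ a)
          + (min (2 * s) (2 * (1 - s)) - min (2 * t) (2 * (1 - t))) • E a b := by
      simp only [segMap]; module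
    calc ‖segMap τ E a b s - segMap τ E a b t‖
        = ‖(s - t) • (τ b - τ a)
            + (min (2 * s) (2 * (1 - s)) - min (2 * t) (2 * (1 - t))) • E a b‖ := by rw [hEq]
      _ ≤ ‖(s - t) • (τ b - τ a)‖
            + ‖(min (2 * s) (2 * (1 - s)) - min (2 * t) (2 * (1 - t))) • E a b‖ :=
          norm_add_le _ _
      _ = |s - t| * ‖τ b - τ a‖
            + |min (2 * s) (2 * (1 - s)) - min (2 * t) (2 * (1 - t))| := by
          rw [norm_smul, norm_smul, hEnorm a b hab, Real.norm_eq_abs, Real.norm_eq_abs,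
            mul_one]
      _ ≤ (L + 2) * |s - t| := by
          nlinarith [mul_le_mul_of_nonneg_left hτ (abs_nonneg (s - t))]
  -- routing through endpoints
  have route : ∀ (a b c d : V) (s t : ℝ), G.Adj a b → G.Adj c d →
      0 ≤ s → s ≤ 1 → 0 ≤ t → t ≤ 1 →
      ‖segMap τ E a b s - segMap τ E c d t‖ ≤ (L + 2) * (s + (G.dist a c : ℝ) + t) := by
    intro a b c d s t hab hcd hs0 hs1 ht0 ht1
    have h1 := key1 a b s hab hs0 hs1
    have h2 := key1 c d t hcd ht0 ht1
    have h3 : ‖τ a - τ c‖ ≤ L * (G.dist a c : ℝ) := hτupp a c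
    have h4 : (0 : ℝ) ≤ (G.dist a c : ℝ) := Nat.cast_nonneg _
    have htri : ‖segMap τ E a b s - segMap τ E c d t‖
        ≤ ‖segMap τ E a b s - τ a‖ + ‖τ a - τ c‖ + ‖τ c - segMap τ E c d t‖ := by
      have := dist_triangle4 (segMap τ E a b s) (τ a) (τ c) (segMap τ E c d t)
      simpa [dist_eq_norm] using this
    have h5 : ‖τ c - segMap τ E c d t‖ = ‖segMap τ E c d t - τ c‖ := norm_sub_rev _ _
    nlinarith [htri, h5]
  -- the bound by the min of the four routes
  have hmin : ∀ x y : ℝ,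
      ‖segMap τ E u v α - segMap τ E w z β‖ ≤ (L + 2) * x →
      ‖segMap τ E u v α - segMap τ E w z β‖ ≤ (L + 2) * y →
      ‖segMap τ E u v α - segMap τ E w z β‖ ≤ (L + 2) * min x y := by
    intro x y h1 h2
    rcases min_cases x y with ⟨h, _⟩ | ⟨h, _⟩ <;> rw [h] <;> assumption
  have r1 : ‖segMap τ E u v α - segMap τ E w z β‖
      ≤ (L + 2) * (α + (G.dist u w : ℝ) + β) :=
    route u v w z α β huv hwz hα0 hα1 hβ0 hβ1
  have r2 : ‖segMap τ E u v α - segMap τ E w z β‖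
      ≤ (L + 2) * (α + (G.dist u z : ℝ) + (1 - β)) := by
    rw [hFsymm w z β]
    exact route u v z w α (1 - β) huv hwz.symm hα0 hα1 (by linarith) (by linarith)
  have r3 : ‖segMap τ E u v α - segMap τ E w z β‖
      ≤ (L + 2) * ((1 - α) + (G.dist v w : ℝ) + β) := by
    rw [hFsymm u v α]
    exact route v u w z (1 - α) β huv.symm hwz (by linarith) (by linarith) hβ0 hβ1
  have r4 : ‖segMap τ E u v α - segMap τ E w z β‖
      ≤ (L + 2) * ((1 - α) + (G.dist v z : ℝ) + (1 - β)) := by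
    rw [hFsymm u v α, hFsymm w z β]
    exact route v u z w (1 - α) (1 - β) huv.symm hwz.symm (by linarith) (by linarith)
      (by linarith) (by linarith)
  have hthrough : ‖segMap τ E u v α - segMap τ E w z β‖
      ≤ (L + 2) * (min (min (α + (G.dist u w : ℝ) + β) (α + (G.dist u z : ℝ) + (1 - β)))
          (min ((1 - α) + (G.dist v w : ℝ) + β) ((1 - α) + (G.dist v z : ℝ) + (1 - β)))) :=
    hmin _ _ (hmin _ _ r1 r2) (hmin _ _ r3 r4)
  show ‖segMap τ E u v α - segMap τ E w z β‖ ≤ (L + 2) * thickeningDist G u v α w z β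
  simp only [thickeningDist]
  split_ifs with h1 h2
  · rw [Prod.mk.injEq] at h1
    obtain ⟨rfl, rfl⟩ := h1
    exact hmin _ _ (segLip u v α β huv) hthrough
  · rw [Prod.mk.injEq] at h2
    obtain ⟨rfl, rfl⟩ := h2
    refine hmin _ _ ?_ hthrough
    rw [hFsymm v u β]
    exact segLip u v α (1 - β) huv
  · exact hthrough
end

section
/- Let L be a normed space, let u, v, w, z ∈ L ⊕₁ ℝ, let M, N, N' ∈ ℕ with N, N' ≥ 1, let x_{uv}, x_{wz} ∈ L with ‖x_{uv}‖, ‖x_{wz}‖ ≤ C, and suppose there are functionals x*_{uv}, x*_{wz} ∈ L* of norm ≤ C with x*_{uv}(x_{uv}) = 1, x*_{uv}(x_{wz}) = 0, x*_{wz}(x_{wz}) = 1, x*_{wz}(x_{uv}) = 0, and both functionals annihilating P_L((1−m/N)Mu + (m/N)Mv − (1−p/N')Mw − (p/N')Mz), where P_L is the projection onto L. Set B = (1−m/N)Mu + (m/N)Mv + m·x_{uv} − (1−p/N')Mw − (p/N')Mz − p·x_{wz} for integers 0 ≤ m ≤ N/2, 0 ≤ p ≤ N'/2. Then ‖B‖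 ≥ max{m, p}/C. -/
theorem norm_B_ge_max_div_C
    {L : Type*} [NormedAddCommGroup L] [NormedSpace ℝ L]
    (u v w z : L × ℝ) (M N N' : ℕ) (hN : 1 ≤ N) (hN' : 1 ≤ N')
    (C : ℝ) (hC : 0 < C)
    (x_uv x_wz : L) (hx_uv : ‖x_uv‖ ≤ C) (hx_wz : ‖x_wz‖ ≤ C)
    (φ_uv φ_wz : L →L[ℝ] ℝ) (hφ_uv : ‖φ_uv‖ ≤ C) (hφ_wz : ‖φ_wz‖ ≤ C)
    (h11 : φ_uv x_uv = 1) (h12 : φ_uv x_wz = 0)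
    (h22 : φ_wz x_wz = 1) (h21 : φ_wz x_uv = 0)
    (m p : ℕ) (hm : (m : ℝ) ≤ N / 2) (hp : (p : ℝ) ≤ N' / 2)
    (A : L × ℝ)
    -- A = (1−m/N)Mu + (m/N)Mv − (1−p/N')Mw − (p/N')Mz
    (hA : A = ((1 - (m : ℝ) / N) * M) • u + (((m : ℝ) / N) * M) • v
      - ((1 - (p : ℝ) / N') * M) • w - (((p : ℝ) / N') * M) • z)
    -- both functionals annihilate P_L A
    (hann_uv : φ_uv A.1 = 0) (hann_wz : φ_wz A.1 = 0)
    (B : L × ℝ)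
    -- B = A + m·x_{uv} − p·x_{wz}  (with x_{uv}, x_{wz} ∈ L viewed inside L ⊕₁ ℝ)
    (hB : B = A + (m : ℝ) • ((x_uv, 0) : L × ℝ) - (p : ℝ) • ((x_wz, 0) : L × ℝ)) :
    -- ‖B‖ ≥ max{m, p}/C, where ‖(x, t)‖ = ‖x‖ + |t| is the norm of L ⊕₁ ℝ
    max (m : ℝ) (p : ℝ) / C ≤ ‖B.1‖ + |B.2| := by
  have hB1 : B.1 = A.1 + (m : ℝ) • x_uv - (p : ℝ) • x_wz := by
    rw [hB]; simp
  have huv : φ_uv B.1 = (m : ℝ) := by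
    simp [hB1, hann_uv, h11, h12]
  have hwz : φ_wz B.1 = -(p : ℝ) := by
    simp [hB1, hann_wz, h22, h21]
  have key : ∀ (φ : L →L[ℝ] ℝ), ‖φ‖ ≤ C → ∀ r : ℝ, φ B.1 = r → |r| / C ≤ ‖B.1‖ := by
    intro φ hφ r hr
    rw [div_le_iff₀ hC]
    calc |r| = ‖φ B.1‖ := by rw [hr]; rfl
    _ ≤ ‖φ‖ * ‖B.1‖ := φ.le_opNorm _
    _ ≤ C * ‖B.1‖ := by
        exact mul_le_mul_of_nonneg_right hφ (norm_nonneg _)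
    _ = ‖B.1‖ * C := mul_comm _ _
  have h1 : (m : ℝ) / C ≤ ‖B.1‖ := by
    simpa using key φ_uv hφ_uv _ huv
  have h2 : (p : ℝ) / C ≤ ‖B.1‖ := by
    have := key φ_wz hφ_wz _ hwz
    simpa using this
  have : max (m : ℝ) (p : ℝ) / C ≤ ‖B.1‖ := by
    rw [div_le_iff₀ hC] at *
    exact max_le h1 h2
  linarith [abs_nonneg B.2]
end
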